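/- Let E : M_n(ℂ) → K be a conditional expectation onto a unital *-subalgebra and f : (0,∞) → (0,∞) continuously differentiable. For positive definite ρ, the Fisher information of the generator I − E satisfies tr((ρ − E(ρ)) f'(ρ)) = d^f(ρ‖E(ρ)) + d^f(E(ρ)‖ρ). In particular, if f is convex, then d^f(ρ‖E(ρ)) ≤ tr((ρ − E(ρ)) f'(ρ)). -/

import Mathlib

open Matrix
open scoped ComplexOrder

/-- Bregman relative entropy `d^f(ρ‖σ) = tr(f(ρ) - f(σ) - (ρ - σ) f'(σ))`. -/
noncomputable def bregman {n : ℕ} (f f' : ℝ → ℝ) (ρ σ : Matrix (Fin n) (Fin n) ℂ) : ℂ :=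
  Matrix.trace (cfc f ρ - cfc f σ - (ρ - σ) * cfc f' σ)

section FisherAux

variable {n : ℕ}

private lemma contOn' (g : ℝ → ℝ) (A : Matrix (Fin n) (Fin n) ℂ) :
    ContinuousOn g (spectrum ℝ A) :=
  (Matrix.finite_real_spectrum (A := A)).continuousOn g

private lemma trace_cfc_eq' (A : Matrix (Fin n) (Fin n) ℂ) (hA : A.IsHermitian) (g : ℝ → ℝ) :
    Matrix.trace (cfc g A) = ((∑ i, g (hA.eigenvalues i) : ℝ) : ℂ) := by
  rw [hA.cfc_eq, Matrix.IsHermitian.cfc, Unitary.conjStarAlgAut_apply, Matrix.trace_mul_cycle]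
  rw [show (star (hA.eigenvectorUnitary : Matrix (Fin n) (Fin n) ℂ)) *
      (hA.eigenvectorUnitary : Matrix (Fin n) (Fin n) ℂ) = 1 from
    Unitary.coe_star_mul_self hA.eigenvectorUnitary, one_mul, Matrix.trace_diagonal]
  push_cast
  rfl

private lemma trace_diag_conj' (d e : Fin n → ℂ) (M : Matrix (Fin n) (Fin n) ℂ) :
    Matrix.trace (Matrix.diagonal d * M * Matrix.diagonal e * star M)
      = ∑ i, ∑ j, d i * e j * (M i j * star (M i j)) := by
  simp only [Matrix.trace, Matrix.diag, Matrix.mul_apply, Matrix.star_apply,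
    Matrix.diagonal_apply, ite_mul, zero_mul, mul_ite, mul_zero,
    Finset.sum_ite_eq, Finset.sum_ite_eq', Finset.mem_univ, if_true,
    Finset.sum_mul, Finset.mul_sum]
  refine Finset.sum_congr rfl fun i _ => Finset.sum_congr rfl fun j _ => ?_
  ring

private lemma trace_cfc_mul_cfc' (A B : Matrix (Fin n) (Fin n) ℂ) (hA : A.IsHermitian)
    (hB : B.IsHermitian) :
    ∃ c : Fin n → Fin n → ℝ, (∀ i j, 0 ≤ c i j) ∧ (∀ i, ∑ j, c i j = 1) ∧
      (∀ j, ∑ i, c i j = 1) ∧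
      ∀ g h : ℝ → ℝ, Matrix.trace (cfc g A * cfc h B) =
        ((∑ i, ∑ j, g (hA.eigenvalues i) * h (hB.eigenvalues j) * c i j : ℝ) : ℂ) := by
  set U := (hA.eigenvectorUnitary : Matrix (Fin n) (Fin n) ℂ) with hU
  set V := (hB.eigenvectorUnitary : Matrix (Fin n) (Fin n) ℂ) with hV
  have hUU : star U * U = 1 := Unitary.coe_star_mul_self hA.eigenvectorUnitary
  have hUU' : U * star U = 1 := Unitary.coe_mul_star_self hA.eigenvectorUnitary
  have hVV : star V * V = 1 := Unitary.coe_star_mul_self hB.eigenvectorUnitary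
  have hVV' : V * star V = 1 := Unitary.coe_mul_star_self hB.eigenvectorUnitary
  set M : Matrix (Fin n) (Fin n) ℂ := star U * V with hM
  have hMt : star M = star V * U := by rw [hM, StarMul.star_mul (star U) V, star_star]
  have hMM : M * star M = 1 := by
    rw [hMt, hM, mul_assoc, ← mul_assoc V, hVV', one_mul, hUU]
  have hMM' : star M * M = 1 := by
    rw [hMt, hM, mul_assoc, ← mul_assoc U, hUU', one_mul, hVV]
  refine ⟨fun i j => Complex.normSq (M i j), fun i j => Complex.normSq_nonneg _,
    fun i => ?_, fun j => ?_, fun g h => ?_⟩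
  · have h1 := congrFun (congrFun hMM i) i
    simp only [Matrix.mul_apply, Matrix.one_apply_eq, Matrix.star_apply] at h1
    have h2 : ((∑ j, Complex.normSq (M i j) : ℝ) : ℂ) = 1 := by
      push_cast
      rw [← h1]
      exact Finset.sum_congr rfl fun j _ => by
        rw [RCLike.star_def, Complex.mul_conj]
    exact_mod_cast h2
  · have h1 := congrFun (congrFun hMM' j) j
    simp only [Matrix.mul_apply, Matrix.one_apply_eq, Matrix.star_apply] at h1
    have h2 : ((∑ i, Complex.normSq (M i j) : ℝ) : ℂ) = 1 := by
      push_cast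
      rw [← h1]
      exact Finset.sum_congr rfl fun i _ => by
        rw [RCLike.star_def, mul_comm, Complex.mul_conj]
    exact_mod_cast h2
  · rw [hA.cfc_eq, hB.cfc_eq, Matrix.IsHermitian.cfc, Matrix.IsHermitian.cfc,
      Unitary.conjStarAlgAut_apply, Unitary.conjStarAlgAut_apply]
    set X : Matrix (Fin n) (Fin n) ℂ := diagonal (RCLike.ofReal ∘ g ∘ hA.eigenvalues) with hX
    set Y : Matrix (Fin n) (Fin n) ℂ := diagonal (RCLike.ofReal ∘ h ∘ hB.eigenvalues) with hY
    have h2 : Matrix.trace (U * X * star U * (V * Y * star V))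
        = Matrix.trace (X * M * Y * star M) := by
      rw [show U * X * star U * (V * Y * star V) = U * (X * star U * (V * Y * star V)) from by
            simp only [mul_assoc],
          Matrix.trace_mul_comm,
          show X * star U * (V * Y * star V) * U = X * M * Y * star M from by
            rw [hMt, hM]; simp only [mul_assoc]]
    rw [h2, hX, hY, trace_diag_conj']
    push_cast
    refine Finset.sum_congr rfl fun i _ => Finset.sum_congr rfl fun j _ => ?_
    rw [RCLike.star_def, Complex.mul_conj]
    simp only [Function.comp_apply, ← RCLike.algebraMap_eq_ofReal, Complex.coe_algebraMap]

private lemma tangent_le' {f f' : ℝ → ℝ} (hconv : ConvexOn ℝ (Set.Ioi 0) f)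
    (hderiv : ∀ x ∈ Set.Ioi (0:ℝ), HasDerivAt f (f' x) x)
    {a b : ℝ} (ha : a ∈ Set.Ioi (0:ℝ)) (hb : b ∈ Set.Ioi (0:ℝ)) :
    0 ≤ f a - f b - (a - b) * f' b := by
  rcases lt_trichotomy a b with h | h | h
  · have h1 := hconv.slope_le_of_hasDerivAt ha hb h (hderiv b hb)
    rw [slope_def_field] at h1
    have h2 : 0 < b - a := by linarith
    have h3 := (div_le_iff₀ h2).mp h1
    nlinarith
  · subst h; simp
  · have h1 := hconv.le_slope_of_hasDerivAt hb ha h (hderiv b hb)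
    rw [slope_def_field] at h1
    have h2 : 0 < a - b := by linarith
    have h3 := (le_div_iff₀ h2).mp h1
    nlinarith

private lemma klein' (f f' : ℝ → ℝ) (hconv : ConvexOn ℝ (Set.Ioi 0) f)
    (hderiv : ∀ x ∈ Set.Ioi (0:ℝ), HasDerivAt f (f' x) x)
    {A B : Matrix (Fin n) (Fin n) ℂ} (hA : A.IsHermitian) (hB : B.IsHermitian)
    (hApos : ∀ i, 0 < hA.eigenvalues i) (hBpos : ∀ i, 0 < hB.eigenvalues i) :
    ∃ r : ℝ, 0 ≤ r ∧
      Matrix.trace (cfc f A - cfc f B - (A - B) * cfc f' B) = (r : ℂ) := by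
  obtain ⟨c, hc0, hrow, hcol, htr⟩ := trace_cfc_mul_cfc' A B hA hB
  set a := hA.eigenvalues with ha
  set b := hB.eigenvalues with hb
  have hAsa : IsSelfAdjoint A := hA.isSelfAdjoint
  have hBsa : IsSelfAdjoint B := hB.isSelfAdjoint
  have honeA : cfc (fun _ : ℝ => (1:ℝ)) A = 1 := cfc_one ℝ A
  have honeB : cfc (fun _ : ℝ => (1:ℝ)) B = 1 := cfc_one ℝ B
  have hidA : cfc (fun x : ℝ => x) A = A := cfc_id' ℝ A
  have hidB : cfc (fun x : ℝ => x) B = B := cfc_id' ℝ B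
  have hmul : cfc (fun x : ℝ => x * f' x) B = B * cfc f' B := by
    rw [cfc_mul (fun x : ℝ => x) f' B (contOn' _ _) (contOn' _ _), hidB]
  have t1 := htr f (fun _ => 1)
  rw [honeB, mul_one] at t1
  have t2 := htr (fun _ => 1) f
  rw [honeA, one_mul] at t2
  have t3 := htr (fun x => x) f'
  rw [hidA] at t3
  have t4 := htr (fun _ => 1) (fun x => x * f' x)
  rw [honeA, one_mul, hmul] at t4
  refine ⟨∑ i, ∑ j, (f (a i) - f (b j) - (a i - b j) * f' (b j)) * c i j, ?_, ?_⟩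
  · refine Finset.sum_nonneg fun i _ => Finset.sum_nonneg fun j _ =>
      mul_nonneg (tangent_le' hconv hderiv (hApos i) (hBpos j)) (hc0 i j)
  · rw [Matrix.trace_sub, Matrix.trace_sub, sub_mul, Matrix.trace_sub, t1, t2, t3, t4]
    push_cast
    rw [show ∀ w x y z : ℂ, w - x - (y - z) = (w - x) - y + z from fun _ _ _ _ => by ring]
    simp only [← Finset.sum_sub_distrib, ← Finset.sum_add_distrib]
    refine Finset.sum_congr rfl fun i _ => Finset.sum_congr rfl fun j _ => ?_
    push_cast
    ring

private lemma cfc_mem_starSubalgebra' (K : StarSubalgebra ℂ (Matrix (Fin n) (Fin n) ℂ))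
    {a : Matrix (Fin n) (Fin n) ℂ} (haK : a ∈ K) (ha : IsSelfAdjoint a) (g : ℝ → ℝ) :
    cfc g a ∈ K := by
  have hfin : (spectrum ℝ a).Finite := Matrix.finite_real_spectrum
  set s : Finset ℝ := hfin.toFinset with hs
  set p : Polynomial ℝ := Lagrange.interpolate s id g with hp
  have heq : (spectrum ℝ a).EqOn g p.eval := by
    intro x hx
    have hxs : x ∈ s := hfin.mem_toFinset.mpr hx
    exact (Lagrange.eval_interpolate_at_node g (Set.injOn_id _) hxs).symm
  rw [cfc_congr heq, cfc_polynomial p a ha]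
  have h1 : Polynomial.aeval a p ∈ Algebra.adjoin ℝ {a} :=
    Polynomial.aeval_mem_adjoin_singleton ℝ a
  have h2 : Algebra.adjoin ℝ ({a} : Set (Matrix (Fin n) (Fin n) ℂ)) ≤
      Subalgebra.restrictScalars ℝ K.toSubalgebra := by
    apply Algebra.adjoin_le
    simpa using haK
  exact h2 h1

private lemma trace_conj_pos' {ρ : Matrix (Fin n) (Fin n) ℂ} (hρ : ρ.PosDef)
    {P : Matrix (Fin n) (Fin n) ℂ} (hP : P ≠ 0) :
    0 < (Matrix.trace (Pᴴ * ρ * P)).re := by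
  have hcol : ∃ j, (fun i => P i j) ≠ 0 := by
    by_contra hc
    push_neg at hc
    apply hP
    ext i j
    exact congrFun (hc j) i
  obtain ⟨j₀, hj₀⟩ := hcol
  have hterm : ∀ j, (Pᴴ * ρ * P) j j =
      dotProduct (star fun i => P i j) (ρ.mulVec fun i => P i j) := by
    intro j
    simp only [Matrix.mul_apply, Matrix.conjTranspose_apply, dotProduct,
      Matrix.mulVec, Pi.star_apply, Finset.mul_sum, Finset.sum_mul]
    rw [Finset.sum_comm]
    refine Finset.sum_congr rfl fun i _ => Finset.sum_congr rfl fun k _ => ?_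
    ring
  have hpos : 0 < Matrix.trace (Pᴴ * ρ * P) := by
    rw [Matrix.trace]
    apply Finset.sum_pos'
    · intro j _
      rw [Matrix.diag, hterm j]
      exact hρ.posSemidef.dotProduct_mulVec_nonneg _
    · exact ⟨j₀, Finset.mem_univ j₀, by
        rw [Matrix.diag, hterm j₀]
        exact hρ.dotProduct_mulVec_pos hj₀⟩
  exact (Complex.lt_def.mp hpos).1

private lemma eq_zero_of_trace_conj' {k : Matrix (Fin n) (Fin n) ℂ}
    (h : Matrix.trace (kᴴ * k) = 0) : k = 0 := by
  have h1 : Matrix.trace (kᴴ * k) = ((∑ j, ∑ i, Complex.normSq (k i j) : ℝ) : ℂ) := by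
    push_cast
    simp only [Matrix.trace, Matrix.diag, Matrix.mul_apply, Matrix.conjTranspose_apply]
    refine Finset.sum_congr rfl fun j _ => Finset.sum_congr rfl fun i _ => ?_
    rw [RCLike.star_def, mul_comm, Complex.mul_conj]
  rw [h1] at h
  have h2 : (∑ j, ∑ i, Complex.normSq (k i j) : ℝ) = 0 := by exact_mod_cast h
  have h3 : ∀ j ∈ Finset.univ, ∀ i ∈ Finset.univ, Complex.normSq (k i j) = 0 := by
    intro j hj
    have := (Finset.sum_eq_zero_iff_of_nonneg fun j _ =>
      Finset.sum_nonneg fun i _ => Complex.normSq_nonneg (k i j)).mp h2 j hj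
    exact fun i hi => (Finset.sum_eq_zero_iff_of_nonneg fun i _ =>
      Complex.normSq_nonneg (k i j)).mp this i hi
  ext i j
  exact Complex.normSq_eq_zero.mp (h3 j (Finset.mem_univ j) i (Finset.mem_univ i))

end FisherAux

/-- for the conditional expectation `E` onto a unital *-subalgebra `K` and C¹ convex
`f : (0,∞) → (0,∞)`, the `f`-Fisher information of the generator `I - E` satisfies
`tr((ρ - E(ρ)) f'(ρ)) = d^f(ρ‖E(ρ)) + d^f(E(ρ)‖ρ)`; in particular (by convexity of `f`)
`d^f(ρ‖E(ρ)) ≤ tr((ρ - E(ρ)) f'(ρ))`. -/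
theorem fisher_information_of_conditional_expectation {n : ℕ}
    (K : StarSubalgebra ℂ (Matrix (Fin n) (Fin n) ℂ))
    (E : Matrix (Fin n) (Fin n) ℂ →ₗ[ℂ] Matrix (Fin n) (Fin n) ℂ)
    (hEmem : ∀ x, E x ∈ K)
    (hEfix : ∀ x ∈ K, E x = x)
    (hEtr : ∀ x, (E x).trace = x.trace)
    (hEadj : ∀ x y, (x * E y).trace = (E x * y).trace)
    (hEmod : ∀ a ∈ K, ∀ b ∈ K, ∀ x, E (a * x * b) = a * E x * b)
    (f f' : ℝ → ℝ)
    (hf_pos : ∀ x ∈ Set.Ioi (0 : ℝ), 0 < f x)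
    (hf_conv : ConvexOn ℝ (Set.Ioi 0) f)
    (hf_deriv : ∀ x ∈ Set.Ioi (0 : ℝ), HasDerivAt f (f' x) x)
    (hf'_cont : ContinuousOn f' (Set.Ioi 0))
    (ρ : Matrix (Fin n) (Fin n) ℂ) (hρ : ρ.PosDef) :
    Matrix.trace ((ρ - E ρ) * cfc f' ρ) =
        bregman f f' ρ (E ρ) + bregman f f' (E ρ) ρ ∧
      (bregman f f' ρ (E ρ)).re ≤ (Matrix.trace ((ρ - E ρ) * cfc f' ρ)).re := by
  set σ := E ρ with hσdef
  -- trace characterization of E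
  have hEchar : ∀ a ∈ K, ∀ x : Matrix (Fin n) (Fin n) ℂ,
      Matrix.trace (a * E x) = Matrix.trace (a * x) := by
    intro a ha x
    rw [hEadj a x, hEfix a ha]
  -- σ is Hermitian
  have hσherm : σ.IsHermitian := by
    have hσK : σ ∈ K := hEmem ρ
    have hσHK : σᴴ ∈ K := by
      simpa [Matrix.star_eq_conjTranspose] using star_mem hσK
    have hzero : ∀ a ∈ K, Matrix.trace (a * (σᴴ - σ)) = 0 := by
      intro a ha
      have e1 : Matrix.trace (a * σᴴ) = Matrix.trace (a * σ) := by
        have s1 : a * σᴴ = (σ * aᴴ)ᴴ := by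
          rw [Matrix.conjTranspose_mul, Matrix.conjTranspose_conjTranspose]
        have haH : aᴴ ∈ K := by
          simpa [Matrix.star_eq_conjTranspose] using star_mem ha
        calc Matrix.trace (a * σᴴ) = star (Matrix.trace (σ * aᴴ)) := by
              rw [s1, Matrix.trace_conjTranspose]
          _ = star (Matrix.trace (aᴴ * σ)) := by rw [Matrix.trace_mul_comm]
          _ = star (Matrix.trace (aᴴ * ρ)) := by rw [hEchar aᴴ haH ρ]
          _ = Matrix.trace ((aᴴ * ρ)ᴴ) := by rw [Matrix.trace_conjTranspose]
          _ = Matrix.trace (ρᴴ * a) := by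
              rw [Matrix.conjTranspose_mul, Matrix.conjTranspose_conjTranspose]
          _ = Matrix.trace (ρ * a) := by rw [hρ.1]
          _ = Matrix.trace (a * ρ) := by rw [Matrix.trace_mul_comm]
          _ = Matrix.trace (a * σ) := (hEchar a ha ρ).symm
      rw [mul_sub, Matrix.trace_sub, e1, sub_self]
    have hkmem : σᴴ - σ ∈ K := K.sub_mem hσHK hσK
    have := hzero ((σᴴ - σ)ᴴ) (by
      simpa [Matrix.star_eq_conjTranspose] using star_mem hkmem)
    have hk0 : σᴴ - σ = 0 := eq_zero_of_trace_conj' this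
    unfold σ at hk0 ⊢
    exact sub_eq_zero.mp hk0
  have hσsa : IsSelfAdjoint σ := hσherm.isSelfAdjoint
  -- eigenvalues of σ are positive
  have hσpos : ∀ i, 0 < hσherm.eigenvalues i := by
    by_contra hcon
    push_neg at hcon
    obtain ⟨j₀, hj₀⟩ := hcon
    set g₀ : ℝ → ℝ := fun x => if x ≤ 0 then 1 else 0 with hg₀
    set P := cfc g₀ σ with hP
    have hPK : P ∈ K := cfc_mem_starSubalgebra' K (hEmem ρ) hσsa g₀
    have hPsa : IsSelfAdjoint P := cfc_predicate g₀ σ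
    have hPherm : Pᴴ = P := by
      simpa [Matrix.star_eq_conjTranspose] using hPsa.star_eq
    have hPP : P * P = P := by
      rw [hP, ← cfc_mul g₀ g₀ σ (contOn' _ _) (contOn' _ _)]
      refine cfc_congr fun x _ => ?_
      by_cases hx : x ≤ 0 <;> simp [hg₀, hx]
    have htrP : Matrix.trace P = ((∑ i, g₀ (hσherm.eigenvalues i) : ℝ) : ℂ) :=
      trace_cfc_eq' σ hσherm g₀
    have hPne : P ≠ 0 := by
      intro h0
      rw [h0, Matrix.trace_zero] at htrP
      have : (∑ i, g₀ (hσherm.eigenvalues i) : ℝ) = 0 := by exact_mod_cast htrP.symm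
      have hge : (1:ℝ) ≤ ∑ i, g₀ (hσherm.eigenvalues i) := by
        have := Finset.single_le_sum (f := fun i => g₀ (hσherm.eigenvalues i))
          (fun i _ => by by_cases hx : hσherm.eigenvalues i ≤ 0 <;> simp [hg₀, hx])
          (Finset.mem_univ j₀)
        simpa [hg₀, hj₀] using this
      linarith
    have hPσ : Matrix.trace (P * σ) = ((∑ i, g₀ (hσherm.eigenvalues i) *
        hσherm.eigenvalues i : ℝ) : ℂ) := by
      have : P * σ = cfc (fun x => g₀ x * x) σ := by
        rw [cfc_mul g₀ (fun x => x) σ (contOn' _ _) (contOn' _ _), cfc_id' ℝ σ, hP]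
      rw [this, trace_cfc_eq' σ hσherm]
    have hnonpos : (∑ i, g₀ (hσherm.eigenvalues i) * hσherm.eigenvalues i : ℝ) ≤ 0 := by
      refine Finset.sum_nonpos fun i _ => ?_
      by_cases hx : hσherm.eigenvalues i ≤ 0
      · simpa [hg₀, hx] using hx
      · simp [hg₀, hx]
    have hre : (Matrix.trace (P * σ)).re ≤ 0 := by
      rw [hPσ]
      simpa using hnonpos
    have hchain : Matrix.trace (P * σ) = Matrix.trace (Pᴴ * ρ * P) := by
      calc Matrix.trace (P * σ) = Matrix.trace (P * ρ) := hEchar P hPK ρ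
        _ = Matrix.trace (P * P * ρ) := by rw [hPP]
        _ = Matrix.trace (P * ρ * P) := (Matrix.trace_mul_cycle P ρ P).symm
        _ = Matrix.trace (Pᴴ * ρ * P) := by rw [hPherm]
    have := trace_conj_pos' hρ hPne
    rw [← hchain] at this
    linarith
  -- the cross term vanishes
  have hg : cfc f' σ ∈ K := cfc_mem_starSubalgebra' K (hEmem ρ) hσsa f'
  have hcross : Matrix.trace ((ρ - σ) * cfc f' σ) = 0 := by
    have e1 : Matrix.trace (ρ * cfc f' σ) = Matrix.trace (σ * cfc f' σ) := by
      calc Matrix.trace (ρ * cfc f' σ) = Matrix.trace (ρ * E (cfc f' σ)) := by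
            rw [hEfix _ hg]
        _ = Matrix.trace (E ρ * cfc f' σ) := hEadj ρ (cfc f' σ)
    rw [sub_mul, Matrix.trace_sub, e1, sub_self]
  -- equality part
  have heq : Matrix.trace ((ρ - σ) * cfc f' ρ) =
      bregman f f' ρ σ + bregman f f' σ ρ := by
    simp only [bregman, Matrix.trace_sub]
    have hswap : σ - ρ = -(ρ - σ) := (neg_sub ρ σ).symm
    rw [hswap, neg_mul, Matrix.trace_neg]
    linear_combination hcross
  refine ⟨heq, ?_⟩
  -- Klein inequality part
  obtain ⟨r, hr0, hrtr⟩ := klein' f f' hf_conv hf_deriv hσherm hρ.1 hσpos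
    (fun i => hρ.eigenvalues_pos i)
  have hbreg : bregman f f' σ ρ = (r : ℂ) := hrtr
  rw [heq, Complex.add_re, hbreg]
  simp only [Complex.ofReal_re]
  linarith
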